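/- Let a, b ≥ 2 be even with at least one of a, b not divisible by 4. Then the cyclic Ramsey number of nested matchings satisfies R_cyc(M_a^nest, M_b^nest) = a + b − 2. -/

import Mathlib

open SimpleGraph Finset

/-- A symmetric `k`-edge-coloring `χ` of the complete graph on `Fin n` contains a copy of `H`
in color `j` via a strictly increasing embedding. -/
def ContainsOrd {m n k : ℕ} (H : SimpleGraph (Fin m))
    (χ : Fin n → Fin n → Fin k) (j : Fin k) : Prop :=
  ∃ φ : Fin m → Fin n, StrictMono φ ∧ ∀ u v : Fin m, H.Adj u v → χ (φ u) (φ v) = j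

/-- Contains a copy via an embedding that is increasing up to a cyclic permutation. -/
def ContainsCyc {m n k : ℕ} (H : SimpleGraph (Fin m))
    (χ : Fin n → Fin n → Fin k) (j : Fin k) : Prop :=
  ∃ φ : Fin m → Fin n, (∃ t : Fin m, StrictMono fun i : Fin m => φ (i + t)) ∧
    ∀ u v : Fin m, H.Adj u v → χ (φ u) (φ v) = j

/-- Contains a copy via an arbitrary injective embedding. -/
def ContainsStd {m n k : ℕ} (H : SimpleGraph (Fin m))
    (χ : Fin n → Fin n → Fin k) (j : Fin k) : Prop :=
  ∃ φ : Fin m → Fin n, Function.Injective φ ∧ ∀ u v : Fin m, H.Adj u v → χ (φ u) (φ v) = j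

/-- The ordered Ramsey number of a family of graphs. -/
noncomputable def Rord {k : ℕ} (m : Fin k → ℕ) (H : ∀ j, SimpleGraph (Fin (m j))) : ℕ :=
  sInf {n | ∀ χ : Fin n → Fin n → Fin k, (∀ u v, χ u v = χ v u) → ∃ j, ContainsOrd (H j) χ j}

/-- The cyclic Ramsey number of a family of graphs. -/
noncomputable def Rcyc {k : ℕ} (m : Fin k → ℕ) (H : ∀ j, SimpleGraph (Fin (m j))) : ℕ :=
  sInf {n | ∀ χ : Fin n → Fin n → Fin k, (∀ u v, χ u v = χ v u) → ∃ j, ContainsCyc (H j) χ j}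

/-- The standard Ramsey number of a family of graphs. -/
noncomputable def Rstd {k : ℕ} (m : Fin k → ℕ) (H : ∀ j, SimpleGraph (Fin (m j))) : ℕ :=
  sInf {n | ∀ χ : Fin n → Fin n → Fin k, (∀ u v, χ u v = χ v u) → ∃ j, ContainsStd (H j) χ j}

/-- The two-color ordered Ramsey number. -/
noncomputable def Rord2 {a b : ℕ} (H₁ : SimpleGraph (Fin a)) (H₂ : SimpleGraph (Fin b)) : ℕ :=
  sInf {n | ∀ χ : Fin n → Fin n → Fin 2, (∀ u v, χ u v = χ v u) →
    ContainsOrd H₁ χ 0 ∨ ContainsOrd H₂ χ 1}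

/-- The two-color cyclic Ramsey number. -/
noncomputable def Rcyc2 {a b : ℕ} (H₁ : SimpleGraph (Fin a)) (H₂ : SimpleGraph (Fin b)) : ℕ :=
  sInf {n | ∀ χ : Fin n → Fin n → Fin 2, (∀ u v, χ u v = χ v u) →
    ContainsCyc H₁ χ 0 ∨ ContainsCyc H₂ χ 1}

/-- The monotone path of order `n`. -/
def monPath (n : ℕ) : SimpleGraph (Fin n) :=
  SimpleGraph.fromRel fun u v => (u : ℕ) + 1 = (v : ℕ)

/-- The monotone cycle of order `n`. -/
def monCycle (n : ℕ) : SimpleGraph (Fin n) :=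
  SimpleGraph.fromRel fun u v => (u : ℕ) + 1 = (v : ℕ) ∨ ((u : ℕ) = 0 ∧ (v : ℕ) = n - 1)

/-- The start-central star of order `n` (center `0`). -/
def starSC (n : ℕ) : SimpleGraph (Fin n) :=
  SimpleGraph.fromRel fun u _ => (u : ℕ) = 0

/-- The star of order `n` with center `c`. -/
def starG (n : ℕ) (c : Fin n) : SimpleGraph (Fin n) :=
  SimpleGraph.fromRel fun u _ => u = c

/-- The nested matching of order `n`. -/
def nestedMatching (n : ℕ) : SimpleGraph (Fin n) :=
  SimpleGraph.fromRel fun u v => (u : ℕ) + (v : ℕ) = n - 1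

/-- Rotational isomorphism of two graphs on `Fin m`. -/
def RotIso {m : ℕ} (G₁ G₂ : SimpleGraph (Fin m)) : Prop :=
  ∃ s : Fin m, ∀ u v : Fin m, G₁.Adj u v ↔ G₂.Adj (u + s) (v + s)

section
def cdist {n : ℕ} (x y : Fin n) : ℕ := min ((y - x).val) ((x - y).val)

lemma cdist_comm {n : ℕ} (x y : Fin n) : cdist x y = cdist y x := min_comm _ _

lemma cdist_eq {n : ℕ} (x y : Fin n) (h : x.val ≤ y.val) :
    cdist x y = min (y.val - x.val) (n - (y.val - x.val)) := by
  have hx := x.isLt; have hy := y.isLt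
  unfold cdist
  rw [Fin.sub_def, Fin.sub_def]
  simp only
  have h1 : (n - x.val + y.val) % n = y.val - x.val := by
    rcases Nat.eq_or_lt_of_le h with he | hlt
    · rw [he]; simp [Nat.sub_add_cancel (le_of_lt hy)]
    · have : n - x.val + y.val = (y.val - x.val) + n := by omega
      rw [this, Nat.add_mod_right, Nat.mod_eq_of_lt (by omega)]
  have h2 : (n - y.val + x.val) % n = if x.val = y.val then 0 else n - (y.val - x.val) := by
    rcases Nat.eq_or_lt_of_le h with he | hlt
    · rw [he]; simp [Nat.sub_add_cancel (le_of_lt hy)]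
    · rw [if_neg (by omega), Nat.mod_eq_of_lt (by omega)]; omega
  rw [h1, h2]
  split <;> omega

lemma psi_gap {m n : ℕ} {ψ : Fin m → Fin n} (hψ : StrictMono ψ) (p d : ℕ) (h : p + d < m) :
    (ψ ⟨p, by omega⟩).val + d ≤ (ψ ⟨p + d, h⟩).val := by
  induction d with
  | zero => simp
  | succ k ih =>
    have h1 : p + k < m := by omega
    have h2 := ih h1
    have h3 : (ψ ⟨p + k, h1⟩) < ψ ⟨p + (k + 1), h⟩ := hψ (by simp [Fin.lt_def])
    have h4 := Fin.lt_def.mp h3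
    omega

lemma Gfacts {m n : ℕ} {ψ : Fin m → Fin n} (hψ : StrictMono ψ) :
    ∃ G : ℕ → ℕ, (∀ i (h : i < m), G i = (ψ ⟨i, h⟩).val) ∧
      (∀ i j, i ≤ j → j < m → G i + (j - i) ≤ G j) ∧ (∀ i (h : i < m), G i < n) := by
  refine ⟨fun i => if h : i < m then (ψ ⟨i, h⟩).val else n + i, fun i h => dif_pos h, ?_, ?_⟩
  · intro i j hij hj
    have hi : i < m := by omega
    show (if h : i < m then (ψ ⟨i, h⟩).val else n + i) + (j - i) ≤
      (if h : j < m then (ψ ⟨j, h⟩).val else n + j)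
    rw [dif_pos hi, dif_pos hj]
    have := psi_gap hψ i (j - i) (by omega : i + (j - i) < m)
    have he : (⟨i + (j - i), by omega⟩ : Fin m) = ⟨j, hj⟩ := by
      apply Fin.ext; simp; omega
    rwa [he] at this
  · intro i h
    show (if h : i < m then (ψ ⟨i, h⟩).val else n + i) < n
    rw [dif_pos h]; exact (ψ ⟨i, h⟩).isLt

lemma noLong {m n d c : ℕ} (hme : Even m) (hc : c < m) (hco : Odd c)
    {ψ : Fin m → Fin n} (hψ : StrictMono ψ)
    (H : ∀ p q : Fin m, (p.val + q.val = c ∨ p.val + q.val = c + m) →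
      d ≤ cdist (ψ p) (ψ q)) : 2 * d + m - 2 ≤ n := by
  obtain ⟨l, hl⟩ := hco
  obtain ⟨m2, hm2⟩ := hme
  obtain ⟨G, hG1, hG2, hG3⟩ := Gfacts hψ
  have H' : ∀ p q : ℕ, p < q → (hq : q < m) → (p + q = c ∨ p + q = c + m) →
      d ≤ G q - G p ∧ d ≤ n - (G q - G p) := by
    intro p q hpq hq hsum
    have hp : p < m := by omega
    have h1 := hG1 p hp
    have h2 := hG1 q hq
    have h3 := hG2 p q (by omega) hq
    have hle : (ψ ⟨p, hp⟩).val ≤ (ψ ⟨q, hq⟩).val := by omega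
    have hcd := H ⟨p, hp⟩ ⟨q, hq⟩ (by simpa using hsum)
    rw [cdist_eq _ _ hle] at hcd
    simp only [le_min_iff] at hcd
    omega
  have A := H' l (l + 1) (by omega) (by omega) (Or.inl (by omega))
  have mono0 := hG2 l (l + 1) (by omega) (by omega)
  have mono1 := hG2 0 l (by omega) (by omega)
  have mono2 := hG2 (l + 1) c (by omega) hc
  rcases Nat.lt_or_ge (c + 1) m with hcm | hcm
  · -- c ≤ m - 2, hence c ≤ m - 3
    have hl2 : l + 1 < m2 := by omega
    have B := H' (l + m2) (l + m2 + 1) (by omega) (by omega) (Or.inr (by omega))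
    have mono5 := hG2 (l + m2) (l + m2 + 1) (by omega) (by omega)
    have mono3 := hG2 c (l + m2) (by omega) (by omega)
    have mono4 := hG2 (l + m2 + 1) (m - 1) (by omega) (by omega)
    have bd := hG3 (m - 1) (by omega)
    omega
  · -- c = m - 1
    have B := H' 0 c (by omega) hc (Or.inl (by omega))
    have bd := hG3 c hc
    omega

lemma noShort {m n c : ℕ} (hme : Even m) (hmo : Odd (m / 2)) (hc : c < m) (hco : Odd c)
    {ψ : Fin m → Fin n} (hψ : StrictMono ψ) :
    ∃ p q : Fin m, (p.val + q.val = c ∨ p.val + q.val = c + m) ∧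
      m / 2 ≤ cdist (ψ p) (ψ q) := by
  obtain ⟨k, hk⟩ := hco
  obtain ⟨m2, hm2⟩ := hme
  have hm2' : m / 2 = m2 := by omega
  obtain ⟨w, hw⟩ := hm2' ▸ hmo
  obtain ⟨G, hG1, hG2, hG3⟩ := Gfacts hψ
  -- choose p q : ℕ with p < q < m, q - p = m2, sum = c or c + m
  obtain ⟨p, q, hpq, hq, hdiff, hsum⟩ :
      ∃ p q : ℕ, p < q ∧ q < m ∧ q - p = m2 ∧ (p + q = c ∨ p + q = c + m) := by
    rcases Nat.lt_or_ge k w with hkw | hkw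
    · exact ⟨k + w + 1, k + 3 * w + 2, by omega, by omega, by omega, Or.inr (by omega)⟩
    · exact ⟨k - w, k + w + 1, by omega, by omega, by omega, Or.inl (by omega)⟩
  have hp : p < m := by omega
  refine ⟨⟨p, hp⟩, ⟨q, hq⟩, by simpa using hsum, ?_⟩
  have h1 := hG1 p hp
  have h2 := hG1 q hq
  have h3 := hG2 p q (by omega) hq
  have hle : (ψ ⟨p, hp⟩).val ≤ (ψ ⟨q, hq⟩).val := by omega
  rw [cdist_eq _ _ hle]
  have mono1 := hG2 0 p (by omega) hp
  have mono2 := hG2 q (m - 1) (by omega) (by omega)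
  have bd := hG3 (m - 1) (by omega)
  simp only [le_min_iff]
  omega
end

lemma modAlt (n x : ℕ) (h0 : 0 < n) (hx : x < 2*n) :
    (x < n ∧ x % n = x) ∨ (n ≤ x ∧ x % n = x - n) := by
  rcases lt_or_ge x n with h1 | h1
  · exact Or.inl ⟨h1, Nat.mod_eq_of_lt h1⟩
  · exact Or.inr ⟨h1, by rw [Nat.mod_eq_sub_mod h1, Nat.mod_eq_of_lt (by omega)]⟩

lemma cyc_edges {m n k : ℕ} (hm : 2 ≤ m) (hme : Even m)
    {χ : Fin n → Fin n → Fin k} {j : Fin k}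
    (hcon : ContainsCyc (nestedMatching m) χ j) :
    ∃ (c : ℕ) (ψ : Fin m → Fin n), c < m ∧ Odd c ∧ StrictMono ψ ∧
      ∀ p q : Fin m, (p.val + q.val = c ∨ p.val + q.val = c + m) → χ (ψ p) (ψ q) = j := by
  obtain ⟨φ, ⟨t, hmono⟩, hedge⟩ := hcon
  obtain ⟨m2, hm2⟩ := hme
  have hm0 : 0 < m := by omega
  have ht := t.isLt
  have hcsplit := modAlt m (2 * m - 1 - 2 * t.val) hm0 (by omega)
  have hc : (2 * m - 1 - 2 * t.val) % m < m := Nat.mod_lt _ hm0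
  have hcodd : Odd ((2 * m - 1 - 2 * t.val) % m) := by
    rcases hcsplit with h | ⟨h1, h2⟩
    · exact ⟨m - 1 - t.val, by omega⟩
    · exact ⟨m - 1 - t.val - m2, by omega⟩
  refine ⟨(2 * m - 1 - 2 * t.val) % m, fun i => φ (i + t), hc, hcodd, hmono, ?_⟩
  intro p q hsum
  have hp := p.isLt; have hq := q.isLt
  have hadj : (nestedMatching m).Adj (p + t) (q + t) := by
    rw [nestedMatching, SimpleGraph.fromRel_adj]
    have hu : ((p + t : Fin m)).val = (p.val + t.val) % m := by
      simp [Fin.add_def]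
    have hv : ((q + t : Fin m)).val = (q.val + t.val) % m := by
      simp [Fin.add_def]
    have hu2 := modAlt m (p.val + t.val) hm0 (by omega)
    have hv2 := modAlt m (q.val + t.val) hm0 (by omega)
    have hsumval : ((p + t : Fin m)).val + ((q + t : Fin m)).val = m - 1 := by
      rw [hu, hv]; omega
    refine ⟨fun hcontra => ?_, Or.inl hsumval⟩
    rw [hcontra] at hsumval
    omega
  exact hedge (p + t) (q + t) hadj

section Aux

lemma buildCyc {m n : ℕ} (hm : 2 ≤ m) (hme : Even m)
    (χ : Fin n → Fin n → Fin 2) (hs : ∀ u v, χ u v = χ v u) (j : Fin 2)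
    (f : Fin (m / 2) → Fin n) (hf : StrictMono f)
    (hhalf : ∀ i, (f i).val < n / 2)
    (hcol : ∀ i, χ (f i) ⟨n - 1 - (f i).val, by have := (f i).isLt; omega⟩ = j) :
    ContainsCyc (nestedMatching m) χ j := by
  have hm2 : m / 2 * 2 = m := Nat.div_mul_cancel hme.two_dvd
  have hn0 : 0 < n := Nat.lt_of_le_of_lt (Nat.zero_le _) (f ⟨0, by omega⟩).isLt
  let φ : Fin m → Fin n := fun u =>
    if h : u.val < m / 2 then f ⟨u.val, h⟩
    else ⟨n - 1 - (f ⟨m - 1 - u.val, by have := u.isLt; omega⟩).val, by omega⟩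
  have hφlow : ∀ (u : Fin m) (h : u.val < m / 2), φ u = f ⟨u.val, h⟩ := fun u h => dif_pos h
  have hφhigh : ∀ (u : Fin m) (h : ¬ u.val < m / 2),
      φ u = ⟨n - 1 - (f ⟨m - 1 - u.val, by have := u.isLt; omega⟩).val, by omega⟩ :=
    fun u h => dif_neg h
  have hmono : StrictMono φ := by
    intro u v huv
    have hu := u.isLt; have hv := v.isLt
    have hlt := Fin.lt_def.mp huv
    by_cases h1 : u.val < m / 2 <;> by_cases h2 : v.val < m / 2
    · rw [hφlow u h1, hφlow v h2]
      exact hf (Fin.mk_lt_mk.mpr hlt)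
    · rw [hφlow u h1, hφhigh v h2]
      have a1 := hhalf ⟨u.val, h1⟩
      have a2 := hhalf ⟨m - 1 - v.val, by omega⟩
      rw [Fin.lt_def]
      simp only
      omega
    · omega
    · rw [hφhigh u h1, hφhigh v h2]
      have a1 := hhalf ⟨m - 1 - u.val, by omega⟩
      have a2 := hhalf ⟨m - 1 - v.val, by omega⟩
      have hlt2 : (f ⟨m - 1 - v.val, by omega⟩) < f ⟨m - 1 - u.val, by omega⟩ :=
        hf (Fin.mk_lt_mk.mpr (by omega))
      have hlt3 := Fin.lt_def.mp hlt2
      rw [Fin.lt_def]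
      simp only at hlt3 ⊢
      omega
  have claim : ∀ u v : Fin m, u.val < v.val → u.val + v.val = m - 1 → χ (φ u) (φ v) = j := by
    intro u v h1 h2
    have hu := u.isLt; have hv := v.isLt
    have hu2 : u.val < m / 2 := by omega
    have hv2 : ¬ v.val < m / 2 := by omega
    rw [hφlow u hu2, hφhigh v hv2]
    have he : (⟨m - 1 - v.val, by omega⟩ : Fin (m / 2)) = ⟨u.val, hu2⟩ := by
      apply Fin.ext; simp; omega
    simp only [he]
    exact hcol ⟨u.val, hu2⟩
  refine ⟨φ, ⟨⟨0, by omega⟩, ?_⟩, ?_⟩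
  · have he : (fun i : Fin m => φ (i + ⟨0, by omega⟩)) = φ := by
      funext i
      congr 1
      apply Fin.ext
      simp [Fin.add_def, Nat.mod_eq_of_lt i.isLt]
    rw [he]; exact hmono
  · intro u v hadj
    rw [nestedMatching, SimpleGraph.fromRel_adj] at hadj
    obtain ⟨hne, hsum⟩ := hadj
    have hsum' : u.val + v.val = m - 1 := by omega
    rcases lt_trichotomy u.val v.val with h | h | h
    · exact claim u v h hsum'
    · exact absurd (Fin.ext h) hne
    · rw [hs]; exact claim v u h (by omega)

end Aux

lemma upper {a b : ℕ} (ha : 2 ≤ a) (hb : 2 ≤ b) (hea : Even a) (heb : Even b)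
    (χ : Fin (a+b-2) → Fin (a+b-2) → Fin 2) (hs : ∀ u v, χ u v = χ v u) :
    ContainsCyc (nestedMatching a) χ 0 ∨ ContainsCyc (nestedMatching b) χ 1 := by
  have hn0 : 0 < a + b - 2 := by omega
  have ha2 : a / 2 * 2 = a := Nat.div_mul_cancel hea.two_dvd
  have hb2 : b / 2 * 2 = b := Nat.div_mul_cancel heb.two_dvd
  have hn2 : (a + b - 2) / 2 * 2 = a + b - 2 := by omega
  let e : ℕ → Fin (a + b - 2) := fun i => ⟨i % (a + b - 2), Nat.mod_lt _ hn0⟩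
  classical
  let pred : ℕ → Prop := fun i => χ (e i) ⟨a + b - 2 - 1 - (e i).val, by omega⟩ = 0
  let S := (Finset.range ((a + b - 2) / 2)).filter pred
  let T := (Finset.range ((a + b - 2) / 2)).filter (fun i => ¬ pred i)
  have hcards : S.card + T.card = (a + b - 2) / 2 := by
    have := Finset.card_filter_add_card_filter_not (s := Finset.range ((a + b - 2) / 2))
      (p := pred)
    simpa using this
  -- generic builder from a big enough filter set
  have main : ∀ (U : Finset ℕ) (m : ℕ) (hm : 2 ≤ m) (hme : Even m) (j : Fin 2),
      m / 2 ≤ U.card → (∀ i ∈ U, i < (a + b - 2) / 2) →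
      (∀ i ∈ U, χ (e i) ⟨a + b - 2 - 1 - (e i).val, by omega⟩ = j) →
      ContainsCyc (nestedMatching m) χ j := by
    intro U m hm hme j hcard hbound hcolU
    let f0 := U.orderEmbOfFin rfl
    let f : Fin (m / 2) → Fin (a + b - 2) := fun i => e (f0 (Fin.castLE hcard i))
    have hmem : ∀ i : Fin (m / 2), (f0 (Fin.castLE hcard i) : ℕ) ∈ U :=
      fun i => U.orderEmbOfFin_mem rfl _
    have hvlt : ∀ i : Fin (m / 2), (f0 (Fin.castLE hcard i) : ℕ) < (a + b - 2) / 2 :=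
      fun i => hbound _ (hmem i)
    have hval : ∀ i : Fin (m / 2), (f i).val = f0 (Fin.castLE hcard i) := by
      intro i
      show (f0 (Fin.castLE hcard i)) % (a + b - 2) = _
      exact Nat.mod_eq_of_lt (by have := hvlt i; omega)
    refine buildCyc hm hme χ hs j f ?_ ?_ ?_
    · intro x y hxy
      rw [Fin.lt_def, hval x, hval y]
      exact f0.strictMono (by exact hxy)
    · intro i; rw [hval i]; exact hvlt i
    · intro i
      exact hcolU _ (hmem i)
  rcases le_or_gt (a / 2) S.card with hS | hS
  · left
    refine main S a ha hea 0 hS ?_ ?_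
    · intro i hi; exact Finset.mem_range.mp (Finset.mem_filter.mp hi).1
    · intro i hi; exact (Finset.mem_filter.mp hi).2
  · right
    refine main T b hb heb 1 (by omega) ?_ ?_
    · intro i hi; exact Finset.mem_range.mp (Finset.mem_filter.mp hi).1
    · intro i hi
      have h2 := (Finset.mem_filter.mp hi).2
      have : ∀ x : Fin 2, x ≠ 0 → x = 1 := by decide
      exact this _ h2

lemma noContainShort {m n : ℕ} (hm : 2 ≤ m) (hme : Even m) (hmo : Odd (m / 2))
    {js : Fin 2} {χ : Fin n → Fin n → Fin 2}
    (hχ : ∀ u v, χ u v = js → cdist u v ≤ m / 2 - 1) :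
    ¬ ContainsCyc (nestedMatching m) χ js := by
  intro hcon
  obtain ⟨c, ψ, hc, hco, hψ, hcol⟩ := cyc_edges hm hme hcon
  obtain ⟨p, q, hsum, hd⟩ := noShort hme hmo hc hco hψ
  have h1 := hχ _ _ (hcol p q hsum)
  obtain ⟨w, hw⟩ := hmo
  omega

lemma noContainLong {m n d : ℕ} (hm : 2 ≤ m) (hme : Even m) (hd : 1 ≤ d)
    (hn : n + 1 ≤ 2 * d + m - 2)
    {jl : Fin 2} {χ : Fin n → Fin n → Fin 2}
    (hχ : ∀ u v, χ u v = jl → d ≤ cdist u v) :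
    ¬ ContainsCyc (nestedMatching m) χ jl := by
  intro hcon
  obtain ⟨c, ψ, hc, hco, hψ, hcol⟩ := cyc_edges hm hme hcon
  have := noLong hme hc hco hψ (fun p q hsum => hχ _ _ (hcol p q hsum))
  omega

lemma restrictCyc {m n k : ℕ} (h : k ≤ n) {H : SimpleGraph (Fin m)}
    {χ : Fin n → Fin n → Fin 2} {j : Fin 2}
    (hc : ContainsCyc H (fun u v => χ (Fin.castLE h u) (Fin.castLE h v)) j) :
    ContainsCyc H χ j := by
  obtain ⟨φ, ⟨t, hmono⟩, hcol⟩ := hc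
  refine ⟨fun i => Fin.castLE h (φ i), ⟨t, ?_⟩, fun u v hadj => hcol u v hadj⟩
  intro x y hxy
  have h2 := Fin.lt_def.mp (hmono hxy)
  rw [Fin.lt_def]
  simpa using h2


theorem stmt15 (a b : ℕ) (ha : 2 ≤ a) (hb : 2 ≤ b) (hea : Even a) (heb : Even b)
    (h4 : ¬ (4 ∣ a) ∨ ¬ (4 ∣ b)) :
    Rcyc2 (nestedMatching a) (nestedMatching b) = a + b - 2 := by
  have ha2 : a / 2 * 2 = a := Nat.div_mul_cancel hea.two_dvd
  have hb2 : b / 2 * 2 = b := Nat.div_mul_cancel heb.two_dvd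
  have hmem : (a + b - 2) ∈ {n | ∀ χ : Fin n → Fin n → Fin 2, (∀ u v, χ u v = χ v u) →
      ContainsCyc (nestedMatching a) χ 0 ∨ ContainsCyc (nestedMatching b) χ 1} :=
    fun χ hs => upper ha hb hea heb χ hs
  rw [Rcyc2]
  refine le_antisymm (Nat.sInf_le hmem) (le_csInf ⟨_, hmem⟩ ?_)
  intro k hk
  by_contra hlt
  push_neg at hlt
  have hk' : k ≤ a + b - 3 := by omega
  have hkn : k ≤ a + b - 3 := hk'
  rcases h4 with h4a | h4b
  · -- Odd (a/2), witness threshold a/2 - 1, short color 0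
    have hao : Odd (a / 2) := by
      rcases Nat.even_or_odd (a / 2) with he | ho
      · exfalso; obtain ⟨r, hr⟩ := he; exact h4a ⟨r, by omega⟩
      · exact ho
    set χw : Fin (a + b - 3) → Fin (a + b - 3) → Fin 2 :=
      fun u v => if cdist u v ≤ a / 2 - 1 then 0 else 1 with hχw
    have hsymm : ∀ u v : Fin k, χw (Fin.castLE hk' u) (Fin.castLE hk' v)
        = χw (Fin.castLE hk' v) (Fin.castLE hk' u) := by
      intro u v; rw [hχw]; simp only; rw [cdist_comm]
    rcases hk (fun u v => χw (Fin.castLE hk' u) (Fin.castLE hk' v)) hsymm with hc | hc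
    · refine noContainShort ha hea hao (js := 0) (χ := χw) ?_ (restrictCyc hk' hc)
      intro u v hcuv
      rw [hχw] at hcuv
      simp only at hcuv
      by_contra hgt
      rw [if_neg hgt] at hcuv
      exact absurd hcuv (by decide)
    · refine noContainLong hb heb (d := a / 2) (by omega) (by omega)
        (jl := 1) (χ := χw) ?_ (restrictCyc hk' hc)
      intro u v hcuv
      rw [hχw] at hcuv
      simp only at hcuv
      by_cases hle : cdist u v ≤ a / 2 - 1
      · rw [if_pos hle] at hcuv; exact absurd hcuv (by decide)
      · omega
  · -- Odd (b/2), witness threshold b/2 - 1, short color 1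
    have hbo : Odd (b / 2) := by
      rcases Nat.even_or_odd (b / 2) with he | ho
      · exfalso; obtain ⟨r, hr⟩ := he; exact h4b ⟨r, by omega⟩
      · exact ho
    set χw : Fin (a + b - 3) → Fin (a + b - 3) → Fin 2 :=
      fun u v => if cdist u v ≤ b / 2 - 1 then 1 else 0 with hχw
    have hsymm : ∀ u v : Fin k, χw (Fin.castLE hk' u) (Fin.castLE hk' v)
        = χw (Fin.castLE hk' v) (Fin.castLE hk' u) := by
      intro u v; rw [hχw]; simp only; rw [cdist_comm]
    rcases hk (fun u v => χw (Fin.castLE hk' u) (Fin.castLE hk' v)) hsymm with hc | hc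
    · refine noContainLong ha hea (d := b / 2) (by omega) (by omega)
        (jl := 0) (χ := χw) ?_ (restrictCyc hk' hc)
      intro u v hcuv
      rw [hχw] at hcuv
      simp only at hcuv
      by_cases hle : cdist u v ≤ b / 2 - 1
      · rw [if_pos hle] at hcuv; exact absurd hcuv (by decide)
      · omega
    · refine noContainShort hb heb hbo (js := 1) (χ := χw) ?_ (restrictCyc hk' hc)
      intro u v hcuv
      rw [hχw] at hcuv
      simp only at hcuv
      by_contra hgt
      rw [if_neg hgt] at hcuv
      exact absurd hcuv (by decide)
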